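/- arXiv:2501.13873 — 3 statements merged into one kernel-verified Lean document; each statement's English description precedes it below -/
import Mathlib

section
/- Let C be a convex body in ℝ^d, let s, t ≥ 0 and λ ∈ [0,1]. Then (1−λ)·interior_s(C) + λ·interior_t(C) ⊆ interior_{(1−λ)s+λt}(C), where + denotes Minkowski sum and scalar multiplication is pointwise. Consequently, for every unit vector v, the function t ↦ width_v(interior_t(C)) is concave on the interval [0, I(C)] where it is defined. -/
open Metric Set Pointwise
open scoped RealInnerProductSpace

/-- The directional width of a set `K` in direction `v`. -/
noncomputable def dirWidth {d : ℕ} (v : EuclideanSpace ℝ (Fin d))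
    (K : Set (EuclideanSpace ℝ (Fin d))) : ℝ :=
  sSup ((fun x => ⟪v, x⟫) '' K) - sInf ((fun x => ⟪v, x⟫) '' K)

/-- The inner parallel body of `C` at distance `ρ`. -/
def innerParallel {d : ℕ} (C : Set (EuclideanSpace ℝ (Fin d))) (ρ : ℝ) :
    Set (EuclideanSpace ℝ (Fin d)) :=
  {x ∈ C | closedBall x ρ ⊆ C}

/-- The inradius of `C`. -/
noncomputable def inradius {d : ℕ} (C : Set (EuclideanSpace ℝ (Fin d))) : ℝ :=
  sSup {r : ℝ | ∃ x, closedBall x r ⊆ C}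

private lemma ip_anti {d : ℕ} (C : Set (EuclideanSpace ℝ (Fin d))) {s t : ℝ}
    (h : s ≤ t) : innerParallel C t ⊆ innerParallel C s := fun x hx =>
  ⟨hx.1, (closedBall_subset_closedBall h).trans hx.2⟩

private lemma ip_closed {d : ℕ} {C : Set (EuclideanSpace ℝ (Fin d))}
    (hC : IsClosed C) (t : ℝ) : IsClosed (innerParallel C t) := by
  have h : innerParallel C t = C ∩ ⋂ w : closedBall (0 : EuclideanSpace ℝ (Fin d)) t,
      (fun x => x + (w : EuclideanSpace ℝ (Fin d))) ⁻¹' C := by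
    ext x
    simp only [innerParallel, mem_sep_iff, mem_inter_iff, mem_iInter, mem_preimage,
      Subtype.forall, mem_closedBall_zero_iff]
    refine and_congr_right fun _ => ⟨fun h w hw => h ?_, fun h y hy => ?_⟩
    · simp [mem_closedBall, dist_eq_norm, hw]
    · have := h (y - x) (by simpa [dist_eq_norm] using hy)
      simpa using this
  rw [h]
  exact hC.inter (isClosed_iInter fun w => hC.preimage (by continuity))

private lemma ip_compact {d : ℕ} {C : Set (EuclideanSpace ℝ (Fin d))}
    (hC : IsCompact C) (t : ℝ) : IsCompact (innerParallel C t) :=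
  hC.of_isClosed_subset (ip_closed hC.isClosed t) (fun _ hx => hx.1)

private lemma mink_incl {d : ℕ} {C : Set (EuclideanSpace ℝ (Fin d))}
    (hconv : Convex ℝ C) (s t lam : ℝ) (hs : 0 ≤ s) (ht : 0 ≤ t) (h0 : 0 ≤ lam) (h1 : lam ≤ 1) :
    (1 - lam) • innerParallel C s + lam • innerParallel C t ⊆
      innerParallel C ((1 - lam) * s + lam * t) := by
  rintro z hz
  rw [Set.mem_add] at hz
  obtain ⟨u, hu, w0, hw0, rfl⟩ := hz
  obtain ⟨p, hp, rfl⟩ := hu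
  obtain ⟨q, hq, rfl⟩ := hw0
  set ρ : ℝ := (1 - lam) * s + lam * t with hρdef
  have hρ : 0 ≤ ρ := add_nonneg (mul_nonneg (by linarith) hs) (mul_nonneg h0 ht)
  have hball : closedBall ((1 - lam) • p + lam • q) ρ ⊆ C := by
    intro y hy
    set w : EuclideanSpace ℝ (Fin d) := y - ((1 - lam) • p + lam • q) with hwdef
    have hyw : y = ((1 - lam) • p + lam • q) + w := by simp [hwdef]
    have hw : ‖w‖ ≤ ρ := by
      rw [mem_closedBall, dist_eq_norm] at hy
      simpa [hwdef] using hy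
    rcases eq_or_lt_of_le hρ with hρ0 | hρ0
    · have : w = 0 := by
        have : ‖w‖ ≤ 0 := by linarith [hw, hρ0]
        simpa using le_antisymm this (norm_nonneg w)
      rw [hyw, this, add_zero]
      exact hconv hp.1 hq.1 (by linarith) h0 (by ring)
    · set p' := p + (s / ρ) • w with hp'def
      set q' := q + (t / ρ) • w with hq'def
      have hp' : p' ∈ C := by
        apply hp.2
        rw [mem_closedBall, dist_eq_norm]
        have : ‖(s / ρ) • w‖ = (s / ρ) * ‖w‖ := by
          rw [norm_smul, Real.norm_eq_abs, abs_of_nonneg (by positivity)]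
        simp only [hp'def, add_sub_cancel_left, this]
        calc (s / ρ) * ‖w‖ ≤ (s / ρ) * ρ := by
              apply mul_le_mul_of_nonneg_left hw (by positivity)
          _ = s := by field_simp
      have hq' : q' ∈ C := by
        apply hq.2
        rw [mem_closedBall, dist_eq_norm]
        have : ‖(t / ρ) • w‖ = (t / ρ) * ‖w‖ := by
          rw [norm_smul, Real.norm_eq_abs, abs_of_nonneg (by positivity)]
        simp only [hq'def, add_sub_cancel_left, this]
        calc (t / ρ) * ‖w‖ ≤ (t / ρ) * ρ := by
              apply mul_le_mul_of_nonneg_left hw (by positivity)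
          _ = t := by field_simp
      have hcoef : (1 - lam) * (s / ρ) + lam * (t / ρ) = 1 := by
        field_simp
        exact hρdef.symm
      have key : (1 - lam) • p' + lam • q'
          = ((1 - lam) • p + lam • q) + ((1 - lam) * (s / ρ) + lam * (t / ρ)) • w := by
        rw [hp'def, hq'def]; module
      rw [hcoef, one_smul, ← hyw] at key
      rw [← key]
      exact hconv hp' hq' (by linarith) h0 (by ring)
  exact ⟨hball (mem_closedBall_self hρ), hball⟩

private lemma ip_inradius_nonempty {d : ℕ} {C : Set (EuclideanSpace ℝ (Fin d))}
    (hcomp : IsCompact C) (hint : (interior C).Nonempty)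
    (v : EuclideanSpace ℝ (Fin d)) (hv : ‖v‖ = 1) :
    0 < inradius C ∧ (innerParallel C (inradius C)).Nonempty := by
  set S : Set ℝ := {r : ℝ | ∃ x, closedBall x r ⊆ C} with hSdef
  obtain ⟨c, hc⟩ := hint
  obtain ⟨ε, hε, hballc⟩ := Metric.mem_nhds_iff.mp (mem_interior_iff_mem_nhds.mp hc)
  have hS1 : ε / 2 ∈ S := ⟨c, (closedBall_subset_ball (by linarith)).trans hballc⟩
  have hSne : S.Nonempty := ⟨ε / 2, hS1⟩
  obtain ⟨R, hR⟩ := hcomp.isBounded.subset_closedBall 0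
  have hR0 : 0 ≤ R := by
    have h1 := hR (interior_subset hc)
    rw [mem_closedBall] at h1
    exact le_trans dist_nonneg h1
  have bdd : BddAbove S := by
    refine ⟨2 * R, fun r hr => ?_⟩
    obtain ⟨x, hx⟩ := hr
    rcases le_or_gt r 0 with h | h
    · linarith
    · have hx1 : ‖x‖ ≤ R := by
        have := hR (hx (mem_closedBall_self h.le))
        rwa [mem_closedBall, dist_zero_right] at this
      have hx2 : ‖x + r • v‖ ≤ R := by
        have hm : x + r • v ∈ closedBall x r := by
          rw [mem_closedBall, dist_eq_norm]
          simp [norm_smul, hv, abs_of_pos h]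
        have := hR (hx hm)
        rwa [mem_closedBall, dist_zero_right] at this
      have : r = ‖(x + r • v) - x‖ := by simp [norm_smul, hv, abs_of_pos h]
      calc r = ‖(x + r • v) - x‖ := this
        _ ≤ ‖x + r • v‖ + ‖x‖ := norm_sub_le _ _
        _ ≤ 2 * R := by linarith
  have hIpos : 0 < inradius C := lt_of_lt_of_le (half_pos hε) (le_csSup bdd hS1)
  refine ⟨hIpos, ?_⟩
  set I := inradius C with hIdef
  have hne : ∀ t : Ioo (0 : ℝ) I, (innerParallel C (t : ℝ)).Nonempty := by
    rintro ⟨t, ht0, htI⟩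
    obtain ⟨r, hrS, hr⟩ := exists_lt_of_lt_csSup hSne htI
    obtain ⟨x, hx⟩ := hrS
    have hsub : closedBall x t ⊆ C := (closedBall_subset_closedBall hr.le).trans hx
    exact ⟨x, hsub (mem_closedBall_self ht0.le), hsub⟩
  haveI : Nonempty (Ioo (0 : ℝ) I) := ⟨⟨I / 2, half_pos hIpos, half_lt_self hIpos⟩⟩
  obtain ⟨x, hx⟩ := IsCompact.nonempty_iInter_of_directed_nonempty_isCompact_isClosed
    (fun t : Ioo (0 : ℝ) I => innerParallel C (t : ℝ))
    (fun i j => ⟨⟨max i j, lt_max_of_lt_left i.2.1, max_lt i.2.2 j.2.2⟩,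
      ip_anti C (le_max_left _ _), ip_anti C (le_max_right _ _)⟩)
    hne (fun t => ip_compact hcomp _) (fun t => ip_closed hcomp.isClosed _)
  have hballI : ball x I ⊆ C := by
    intro y hy
    rw [mem_ball] at hy
    have ht : max (dist y x) (I / 2) ∈ Ioo (0 : ℝ) I :=
      ⟨lt_max_of_lt_right (half_pos hIpos), max_lt hy (half_lt_self hIpos)⟩
    have hxmem := mem_iInter.mp hx ⟨_, ht⟩
    exact hxmem.2 (by rw [mem_closedBall]; exact le_max_left _ _)
  have hsubI : closedBall x I ⊆ C := by
    rw [← closure_ball x (ne_of_gt hIpos)]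
    calc closure (ball x I) ⊆ closure C := closure_mono hballI
      _ = C := hcomp.isClosed.closure_eq
  exact ⟨x, hsubI (mem_closedBall_self hIpos.le), hsubI⟩

private lemma sup_attained {d : ℕ} (v : EuclideanSpace ℝ (Fin d))
    {K : Set (EuclideanSpace ℝ (Fin d))} (hK : IsCompact K) (hne : K.Nonempty) :
    ∃ p ∈ K, (∀ z ∈ K, ⟪v, z⟫ ≤ ⟪v, p⟫) ∧ sSup ((fun x => ⟪v, x⟫) '' K) = ⟪v, p⟫ := by
  have hcont : Continuous fun z : EuclideanSpace ℝ (Fin d) => ⟪v, z⟫ :=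
    continuous_const.inner continuous_id
  obtain ⟨p, hp, hmax⟩ := hK.exists_isMaxOn hne hcont.continuousOn
  exact ⟨p, hp, fun z hz => hmax hz,
    IsGreatest.csSup_eq ⟨mem_image_of_mem _ hp, by rintro _ ⟨z, hz, rfl⟩; exact hmax hz⟩⟩

private lemma inf_attained {d : ℕ} (v : EuclideanSpace ℝ (Fin d))
    {K : Set (EuclideanSpace ℝ (Fin d))} (hK : IsCompact K) (hne : K.Nonempty) :
    ∃ p ∈ K, (∀ z ∈ K, ⟪v, p⟫ ≤ ⟪v, z⟫) ∧ sInf ((fun x => ⟪v, x⟫) '' K) = ⟪v, p⟫ := by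
  have hcont : Continuous fun z : EuclideanSpace ℝ (Fin d) => ⟪v, z⟫ :=
    continuous_const.inner continuous_id
  obtain ⟨p, hp, hmin⟩ := hK.exists_isMinOn hne hcont.continuousOn
  exact ⟨p, hp, fun z hz => hmin hz,
    IsLeast.csInf_eq ⟨mem_image_of_mem _ hp, by rintro _ ⟨z, hz, rfl⟩; exact hmin hz⟩⟩

/-- For a convex body `C`, `s, t ≥ 0` and `λ ∈ [0,1]`, the Minkowski combination of inner
parallel bodies satisfies
`(1−λ)·interior_s(C) + λ·interior_t(C) ⊆ interior_{(1−λ)s+λt}(C)`; consequently, for every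
unit vector `v` the map `t ↦ width_v (interior_t C)` is concave on `[0, I(C)]`. -/
theorem innerParallel_concave {d : ℕ} (C : Set (EuclideanSpace ℝ (Fin d)))
    (hcomp : IsCompact C) (hconv : Convex ℝ C) (hint : (interior C).Nonempty)
    (v : EuclideanSpace ℝ (Fin d)) (hv : ‖v‖ = 1) :
    (∀ s t lam : ℝ, 0 ≤ s → 0 ≤ t → 0 ≤ lam → lam ≤ 1 →
      (1 - lam) • innerParallel C s + lam • innerParallel C t ⊆
        innerParallel C ((1 - lam) * s + lam * t)) ∧
    ConcaveOn ℝ (Icc 0 (inradius C)) (fun t => dirWidth v (innerParallel C t)) := by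
  refine ⟨fun s t lam hs ht h0 h1 => mink_incl hconv s t lam hs ht h0 h1,
    convex_Icc _ _, fun x hx y hy a b ha hb hab => ?_⟩
  obtain ⟨hIpos, xI, hxI⟩ := ip_inradius_nonempty hcomp hint v hv
  have hxne : (innerParallel C x).Nonempty := ⟨xI, ip_anti C hx.2 hxI⟩
  have hyne : (innerParallel C y).Nonempty := ⟨xI, ip_anti C hy.2 hxI⟩
  obtain ⟨p, hpK, hpmax, hpsup⟩ := sup_attained v (ip_compact hcomp x) hxne
  obtain ⟨q, hqK, hqmax, hqsup⟩ := sup_attained v (ip_compact hcomp y) hyne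
  obtain ⟨p', hpK', hpmin, hpinf⟩ := inf_attained v (ip_compact hcomp x) hxne
  obtain ⟨q', hqK', hqmin, hqinf⟩ := inf_attained v (ip_compact hcomp y) hyne
  have h1b : 1 - b = a := by linarith
  have hincl := mink_incl hconv x y b hx.1 hy.1 hb (by linarith)
  rw [h1b] at hincl
  have hmem : a • p + b • q ∈ innerParallel C (a * x + b * y) :=
    hincl (Set.add_mem_add (Set.smul_mem_smul_set hpK) (Set.smul_mem_smul_set hqK))
  have hmem' : a • p' + b • q' ∈ innerParallel C (a * x + b * y) :=
    hincl (Set.add_mem_add (Set.smul_mem_smul_set hpK') (Set.smul_mem_smul_set hqK'))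
  have hcont : Continuous fun z : EuclideanSpace ℝ (Fin d) => ⟪v, z⟫ :=
    continuous_const.inner continuous_id
  have hcpt : IsCompact ((fun z => ⟪v, z⟫) '' innerParallel C (a * x + b * y)) :=
    (ip_compact hcomp _).image hcont
  have h1 : a * ⟪v, p⟫ + b * ⟪v, q⟫
      ≤ sSup ((fun z => ⟪v, z⟫) '' innerParallel C (a * x + b * y)) := by
    calc a * ⟪v, p⟫ + b * ⟪v, q⟫ = ⟪v, a • p + b • q⟫ := by
          rw [inner_add_right, real_inner_smul_right, real_inner_smul_right]
      _ ≤ _ := le_csSup hcpt.bddAbove (mem_image_of_mem _ hmem)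
  have h2 : sInf ((fun z => ⟪v, z⟫) '' innerParallel C (a * x + b * y))
      ≤ a * ⟪v, p'⟫ + b * ⟪v, q'⟫ := by
    calc sInf ((fun z => ⟪v, z⟫) '' innerParallel C (a * x + b * y))
          ≤ ⟪v, a • p' + b • q'⟫ := csInf_le hcpt.bddBelow (mem_image_of_mem _ hmem')
      _ = a * ⟪v, p'⟫ + b * ⟪v, q'⟫ := by
          rw [inner_add_right, real_inner_smul_right, real_inner_smul_right]
  simp only [smul_eq_mul, dirWidth]
  rw [hpsup, hqsup, hpinf, hqinf]
  nlinarith [h1, h2]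
end

section
/- Let C be a convex body in ℝ^d, n ≥ 2 an integer, and ρ > 0 with width(C^ρ) = 2nρ. Let v be a unit vector attaining this width, i.e., width_v(C^ρ) = 2nρ, and let α = min_{y ∈ C^ρ} v·y. Define the n pieces C_1 = C ∩ {x : v·x ≤ α + 2ρ}, C_k = C ∩ {x : α + 2ρ(k−1) ≤ v·x ≤ α + 2ρk} for 1 < k < n, and C_n = C ∩ {x : v·x ≥ α + 2ρ(n−1)}. Then every closed ball contained in some piece C_k has radius at most ρ; in particular max_k I(C_k) ≤ ρ whenever C_k is a convex body. -/
open Metric Set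
open scoped RealInnerProductSpace

/-- The width of `K`: the minimum directional width over all unit directions. -/
noncomputable def setWidth {d : ℕ} (K : Set (EuclideanSpace ℝ (Fin d))) : ℝ :=
  sInf {w | ∃ v : EuclideanSpace ℝ (Fin d), ‖v‖ = 1 ∧ w = dirWidth v K}

/-- The `ρ`-rounded body `C^ρ`: the union of all closed `ρ`-balls contained in `C`. -/
def rounded {d : ℕ} (C : Set (EuclideanSpace ℝ (Fin d))) (ρ : ℝ) :
    Set (EuclideanSpace ℝ (Fin d)) :=
  {y | ∃ x, closedBall x ρ ⊆ C ∧ y ∈ closedBall x ρ}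

/-- For a convex body `C`, `n ≥ 2` and `ρ > 0` with `width (C^ρ) = 2nρ`, let `v` be a unit
vector attaining this width and `α = min {v·y : y ∈ C^ρ}`. Cutting `C` by the `n − 1`
parallel hyperplanes `{x : v·x = α + 2ρk}`, `k = 1, …, n−1`, every closed ball contained in
one of the resulting `n` pieces has radius at most `ρ`. -/
theorem pieces_inradius_le {d : ℕ} (C : Set (EuclideanSpace ℝ (Fin d)))
    (hcomp : IsCompact C) (hconv : Convex ℝ C) (hint : (interior C).Nonempty)
    (n : ℕ) (hn : 2 ≤ n) (ρ : ℝ) (hρ : 0 < ρ)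
    (hwidth : setWidth (rounded C ρ) = 2 * n * ρ)
    (v : EuclideanSpace ℝ (Fin d)) (hv : ‖v‖ = 1)
    (hvwidth : dirWidth v (rounded C ρ) = 2 * n * ρ)
    (α : ℝ) (hα : α = sInf ((fun y => ⟪v, y⟫) '' rounded C ρ)) :
    (∀ (x : EuclideanSpace ℝ (Fin d)) (r : ℝ),
        closedBall x r ⊆ C ∩ {y | ⟪v, y⟫ ≤ α + 2 * ρ} → r ≤ ρ) ∧
    (∀ k : ℕ, 1 < k → k < n →
      ∀ (x : EuclideanSpace ℝ (Fin d)) (r : ℝ),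
        closedBall x r ⊆
            C ∩ {y | α + 2 * ρ * ((k : ℝ) - 1) ≤ ⟪v, y⟫ ∧ ⟪v, y⟫ ≤ α + 2 * ρ * (k : ℝ)} →
        r ≤ ρ) ∧
    (∀ (x : EuclideanSpace ℝ (Fin d)) (r : ℝ),
        closedBall x r ⊆ C ∩ {y | α + 2 * ρ * ((n : ℝ) - 1) ≤ ⟪v, y⟫} → r ≤ ρ) := by
  have hn' : (2 : ℝ) ≤ (n : ℝ) := by exact_mod_cast hn
  have hpos : (0 : ℝ) < 2 * n * ρ := by nlinarith
  set S := (fun y => ⟪v, y⟫) '' rounded C ρ with hS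
  have hsubC : rounded C ρ ⊆ C := by
    rintro y ⟨c, hc, hy⟩; exact hc hy
  obtain ⟨R, hR⟩ : ∃ R, ∀ y ∈ C, ‖y‖ ≤ R := by
    obtain ⟨R, hR⟩ := hcomp.isBounded.subset_closedBall 0
    exact ⟨R, fun y hy => by simpa using hR hy⟩
  have hbddA : BddAbove S := by
    refine ⟨R, ?_⟩
    rintro w ⟨y, hy, rfl⟩
    calc ⟪v, y⟫ ≤ ‖v‖ * ‖y‖ := real_inner_le_norm v y
      _ ≤ R := by rw [hv, one_mul]; exact hR y (hsubC hy)
  have hbddB : BddBelow S := by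
    refine ⟨-R, ?_⟩
    rintro w ⟨y, hy, rfl⟩
    have h1 : ⟪v, -y⟫ ≤ ‖v‖ * ‖-y‖ := real_inner_le_norm v (-y)
    rw [inner_neg_right, hv, one_mul, norm_neg] at h1
    have := hR y (hsubC hy)
    simp only; linarith
  have hne : S.Nonempty := by
    by_contra h
    rw [not_nonempty_iff_eq_empty] at h
    have : dirWidth v (rounded C ρ) = 0 := by
      unfold dirWidth
      rw [← hS, h, Real.sSup_empty, Real.sInf_empty]; ring
    rw [hvwidth] at this; linarith
  have hsup : sSup S = α + 2 * n * ρ := by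
    have h1 := hvwidth
    unfold dirWidth at h1
    rw [← hS] at h1
    rw [hα]; linarith
  have hvv : ⟪v, v⟫ = (1 : ℝ) := by
    rw [real_inner_self_eq_norm_sq, hv]; norm_num
  have key : ∀ x : EuclideanSpace ℝ (Fin d), closedBall x ρ ⊆ C →
      α + ρ ≤ ⟪v, x⟫ ∧ ⟪v, x⟫ ≤ α + 2 * n * ρ - ρ := by
    intro x hx
    have hmem : ∀ t : ℝ, |t| ≤ ρ → x + t • v ∈ rounded C ρ := by
      intro t ht
      refine ⟨x, hx, ?_⟩
      rw [mem_closedBall, dist_eq_norm]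
      simp [norm_smul, hv, ht]
    have hip : ∀ t : ℝ, ⟪v, x + t • v⟫ = ⟪v, x⟫ + t := by
      intro t
      rw [inner_add_right, real_inner_smul_right, hvv, mul_one]
    have h1 : α ≤ ⟪v, x + (-ρ) • v⟫ := by
      rw [hα]
      exact csInf_le hbddB ⟨_, hmem (-ρ) (by rw [abs_neg, abs_of_nonneg hρ.le]), rfl⟩
    have h2 : ⟪v, x + ρ • v⟫ ≤ α + 2 * n * ρ := by
      rw [← hsup]
      exact le_csSup hbddA ⟨_, hmem ρ (by rw [abs_of_nonneg hρ.le]), rfl⟩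
    rw [hip] at h1 h2
    constructor <;> linarith
  have hptmem : ∀ (x : EuclideanSpace ℝ (Fin d)) (t : ℝ), |t| ≤ t →
      True := fun _ _ _ => trivial
  refine ⟨?_, ?_, ?_⟩
  · intro x r hsub
    by_contra hr
    push_neg at hr
    have hxK : closedBall x ρ ⊆ C := fun y hy =>
      (hsub (closedBall_subset_closedBall hr.le hy)).1
    have hlo := (key x hxK).1
    have hpt : x + r • v ∈ closedBall x r := by
      rw [mem_closedBall, dist_eq_norm]
      simp [norm_smul, hv, abs_of_nonneg (hρ.le.trans hr.le)]
    have h2 := (hsub hpt).2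
    simp only [mem_setOf_eq] at h2
    rw [inner_add_right, real_inner_smul_right, hvv, mul_one] at h2
    linarith
  · intro k hk1 hkn x r hsub
    by_contra hr
    push_neg at hr
    have hr0 : (0 : ℝ) ≤ r := hρ.le.trans hr.le
    have hpt1 : x + r • v ∈ closedBall x r := by
      rw [mem_closedBall, dist_eq_norm]
      simp [norm_smul, hv, abs_of_nonneg hr0]
    have hpt2 : x + (-r) • v ∈ closedBall x r := by
      rw [mem_closedBall, dist_eq_norm]
      simp [norm_smul, hv, abs_of_nonneg hr0]
    have h1 := (hsub hpt1).2.2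
    have h2 := (hsub hpt2).2.1
    rw [inner_add_right, real_inner_smul_right, hvv, mul_one] at h1 h2
    linarith
  · intro x r hsub
    by_contra hr
    push_neg at hr
    have hxK : closedBall x ρ ⊆ C := fun y hy =>
      (hsub (closedBall_subset_closedBall hr.le hy)).1
    have hhi := (key x hxK).2
    have hpt : x + (-r) • v ∈ closedBall x r := by
      rw [mem_closedBall, dist_eq_norm]
      simp [norm_smul, hv, abs_of_nonneg (hρ.le.trans hr.le)]
    have h2 := (hsub hpt).2
    simp only [mem_setOf_eq] at h2
    rw [inner_add_right, real_inner_smul_right, hvv, mul_one] at h2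
    linarith
end

section
/- Let A ∈ ℝ^{m×d} and b ∈ ℝ^m be such that the polyhedron P = {x ∈ ℝ^d : Ax ≤ b} is nonempty and bounded. Then there exists a subset S ⊆ [m] with |S| ≤ 2d such that the polyhedron {x ∈ ℝ^d : A_i·x ≤ b_i for all i ∈ S} is bounded. -/
open Metric Set
open scoped RealInnerProductSpace

section Helpers

variable {m : ℕ} {E : Type*} [NormedAddCommGroup E] [InnerProductSpace ℝ E]

/-- Conic Carathéodory: a nonnegative combination can be rewritten using a linearly
independent subfamily. -/
lemma carath_cone (A : Fin m → E) (T : Finset (Fin m)) (μ : Fin m → ℝ)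
    (hμ : ∀ i ∈ T, 0 ≤ μ i) :
    ∃ T' ⊆ T, LinearIndependent ℝ (fun i : T' => A i) ∧
      ∃ μ' : Fin m → ℝ, (∀ i, 0 ≤ μ' i) ∧
        ∑ i ∈ T', μ' i • A i = ∑ i ∈ T, μ i • A i := by
  induction T using Finset.strongInduction generalizing μ with
  | _ T ih =>
  by_cases hLI : LinearIndependent ℝ (fun i : T => A i)
  · refine ⟨T, le_refl _, hLI, fun i => if i ∈ T then μ i else 0, fun i => ?_, ?_⟩
    · dsimp only; split_ifs with h
      · exact hμ _ h
      · exact le_refl 0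
    · exact Finset.sum_congr rfl fun i hi => by simp [hi]
  · -- extract a linear dependence with a positive coefficient somewhere
    obtain ⟨g, hgsum, j, hj⟩ := Fintype.not_linearIndependent_iff.mp hLI
    -- turn the subtype sum into a Finset sum
    have hsum : ∀ c : Fin m → ℝ, ∑ i : T, c i • A i = ∑ i ∈ T, c i • A i := fun c =>
      Finset.sum_coe_sort T (fun i => c i • A i)
    obtain ⟨g, hgsum, j, hjT, hjpos⟩ :
        ∃ g : Fin m → ℝ, (∑ i ∈ T, g i • A i = 0) ∧ ∃ j ∈ T, 0 < g j := by
      rcases lt_or_gt_of_ne (Ne.symm hj) with hpos | hneg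
      · refine ⟨fun i => if h : i ∈ T then g ⟨i, h⟩ else 0, ?_, j, j.2, ?_⟩
        · rw [← hsum, ← hgsum]
          refine Finset.sum_congr rfl fun i _ => ?_
          simp [i.2]
        · simpa [j.2] using hpos
      · refine ⟨fun i => if h : i ∈ T then -g ⟨i, h⟩ else 0, ?_, j, j.2, ?_⟩
        · rw [← hsum]
          rw [← neg_eq_zero, ← Finset.sum_neg_distrib, ← hgsum]
          refine Finset.sum_congr rfl fun i _ => ?_
          simp [i.2]
        · simp [j.2]; linarith
    -- minimal ratio
    set I : Finset (Fin m) := T.filter (fun i => 0 < g i) with hI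
    have hjI : j ∈ I := Finset.mem_filter.mpr ⟨hjT, hjpos⟩
    have hIne : I.Nonempty := ⟨j, hjI⟩
    obtain ⟨i0, hi0I, hi0min⟩ := I.exists_min_image (fun i => μ i / g i) hIne
    have hi0T : i0 ∈ T := (Finset.mem_filter.mp hi0I).1
    have hgi0 : 0 < g i0 := (Finset.mem_filter.mp hi0I).2
    set t : ℝ := μ i0 / g i0 with ht
    have htnn : 0 ≤ t := div_nonneg (hμ _ hi0T) hgi0.le
    set ν : Fin m → ℝ := fun i => μ i - t * g i with hν
    have hνnn : ∀ i ∈ T, 0 ≤ ν i := by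
      intro i hiT
      by_cases hgi : 0 < g i
      · have := hi0min i (Finset.mem_filter.mpr ⟨hiT, hgi⟩)
        have : t * g i ≤ μ i := by
          rw [ht] at this ⊢
          calc μ i0 / g i0 * g i ≤ μ i / g i * g i := by
                exact mul_le_mul_of_nonneg_right this hgi.le
            _ = μ i := div_mul_cancel₀ _ hgi.ne'
        simpa [hν] using sub_nonneg.mpr this
      · push_neg at hgi
        have : t * g i ≤ 0 := mul_nonpos_of_nonneg_of_nonpos htnn hgi
        have := hμ i hiT
        simp only [hν]; linarith
    have hνi0 : ν i0 = 0 := by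
      simp only [hν, ht]
      field_simp
      ring
    have hsumeq : ∑ i ∈ T.erase i0, ν i • A i = ∑ i ∈ T, μ i • A i := by
      have h1 : ∑ i ∈ T, ν i • A i = ∑ i ∈ T, μ i • A i - t • ∑ i ∈ T, g i • A i := by
        rw [Finset.smul_sum, ← Finset.sum_sub_distrib]
        refine Finset.sum_congr rfl fun i _ => ?_
        simp [hν, sub_smul, smul_smul]
      rw [← Finset.add_sum_erase T _ hi0T] at h1
      rw [hgsum] at h1
      simp [hνi0] at h1
      simpa using h1
    obtain ⟨T', hT'sub, hT'LI, μ', hμ'nn, hμ'sum⟩ :=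
      ih (T.erase i0) (Finset.erase_ssubset hi0T) ν (fun i hi => hνnn i (Finset.mem_of_mem_erase hi))
    exact ⟨T', hT'sub.trans (Finset.erase_subset _ _), hT'LI, μ', hμ'nn,
      by rw [hμ'sum, hsumeq]⟩

/-- From any finite family one can extract a linearly independent subfamily with the
same span. -/
lemma extract_basis (A : Fin m → E) (T : Finset (Fin m)) :
    ∃ T' ⊆ T, LinearIndependent ℝ (fun i : T' => A i) ∧
      Submodule.span ℝ (A '' T') = Submodule.span ℝ (A '' T) := by
  induction T using Finset.strongInduction with
  | _ T ih =>
  by_cases hLI : LinearIndependent ℝ (fun i : T => A i)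
  · exact ⟨T, le_refl _, hLI, rfl⟩
  · obtain ⟨g, hgsum, j, hj⟩ := Fintype.not_linearIndependent_iff.mp hLI
    have hsum : ∑ i : T, g i • A i = ∑ i ∈ T, (fun i => if h : i ∈ T then g ⟨i, h⟩ else 0) i • A i := by
      rw [← Finset.sum_coe_sort T]
      refine Finset.sum_congr rfl fun i _ => by simp [i.2]
    set c : Fin m → ℝ := fun i => if h : i ∈ T then g ⟨i, h⟩ else 0 with hc
    have hcsum : ∑ i ∈ T, c i • A i = 0 := by rw [← hsum, hgsum]
    have hcj : c j ≠ 0 := by simpa [hc, j.2] using hj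
    -- A j is in the span of the rest
    have hspan : Submodule.span ℝ (A '' (T.erase j)) = Submodule.span ℝ (A '' T) := by
      apply le_antisymm
      · exact Submodule.span_mono (Set.image_mono (by
          simpa using Finset.erase_subset (j : Fin m) T))
      · rw [Submodule.span_le]
        rintro x ⟨i, hiT, rfl⟩
        simp only [Finset.coe_sort_coe, SetLike.mem_coe]
        by_cases hij : i = (j : Fin m)
        · have hjT : (j : Fin m) ∈ T := j.2
          have hexp : c ↑j • A ↑j = -∑ k ∈ T.erase ↑j, c k • A k := by
            rw [eq_neg_iff_add_eq_zero, Finset.add_sum_erase _ (fun k => c k • A k) hjT, hcsum]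
          have hAi : A ↑j = (-(c ↑j))⁻¹ • ∑ k ∈ T.erase ↑j, c k • A k := by
            rw [← neg_inv, neg_smul, ← smul_neg, ← hexp, smul_smul,
              inv_mul_cancel₀ hcj, one_smul]
          rw [hij, hAi]
          refine Submodule.smul_mem _ _ (Submodule.sum_mem _ fun k hk => ?_)
          exact Submodule.smul_mem _ _ (Submodule.subset_span ⟨k, by simpa using (Finset.mem_erase.mp hk).symm, rfl⟩)
        · exact Submodule.subset_span ⟨i, by simp [Finset.mem_erase, hij, hiT], rfl⟩
    obtain ⟨T', hsub, hLI', hspan'⟩ := ih (T.erase j) (Finset.erase_ssubset j.2)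
    exact ⟨T', hsub.trans (Finset.erase_subset _ _), hLI', by rw [hspan', hspan]⟩

/-- The cone generated by finitely many vectors. -/
def coneOf (A : Fin m → E) : Set E :=
  {x | ∃ μ : Fin m → ℝ, (∀ i, 0 ≤ μ i) ∧ x = ∑ i, μ i • A i}

lemma isClosed_coneOf (A : Fin m → E) : IsClosed (coneOf A) := by
  classical
  have hrepr : coneOf A =
      ⋃ T' ∈ {T : Finset (Fin m) | LinearIndependent ℝ (fun i : T => A i)},
        (fun g : ↥T' → ℝ => ∑ i : T', g i • A i) ''
          {g | ∀ i, 0 ≤ g i} := by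
    ext x
    simp only [Set.mem_iUnion, Set.mem_image, Set.mem_setOf_eq]
    constructor
    · rintro ⟨μ, hμ, rfl⟩
      obtain ⟨T', hT'sub, hLI, μ', hμ', hsum⟩ :=
        carath_cone A Finset.univ μ (fun i _ => hμ i)
      refine ⟨T', hLI, fun i => μ' i, fun i => hμ' i, ?_⟩
      rw [Finset.sum_coe_sort T' (fun i => μ' i • A i), hsum]
    · rintro ⟨T', hLI, g, hg, rfl⟩
      refine ⟨fun i => if h : i ∈ T' then g ⟨i, h⟩ else 0, fun i => ?_, ?_⟩
      · dsimp only; split_ifs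
        · exact hg _
        · exact le_refl 0
      · symm
        rw [← Finset.sum_subset (Finset.subset_univ T')
          (by intro i _ hi; simp [hi])]
        rw [← Finset.sum_coe_sort T'
          (fun i => (if h : i ∈ T' then g ⟨i, h⟩ else 0) • A i)]
        exact Finset.sum_congr rfl fun i _ => by simp [i.2]
  rw [hrepr]
  refine Set.Finite.isClosed_biUnion (Set.toFinite _) ?_
  intro T' hLI
  simp only [Set.mem_setOf_eq] at hLI
  have hker : LinearMap.ker ((Fintype.linearCombination ℝ) (fun i : T' => A i)) = ⊥ := by
    rw [LinearMap.ker_eq_bot']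
    intro g hg
    rw [Fintype.linearCombination_apply] at hg
    funext i
    exact Fintype.linearIndependent_iff.mp hLI g hg i
  have hemb := LinearMap.isClosedEmbedding_of_injective hker
  have horth : IsClosed {g : ↥T' → ℝ | ∀ i, 0 ≤ g i} := by
    have : {g : ↥T' → ℝ | ∀ i, 0 ≤ g i} = ⋂ i, {g | 0 ≤ g i} := by
      ext g; simp
    rw [this]
    exact isClosed_iInter fun i => isClosed_le continuous_const (continuous_apply i)
  have := hemb.isClosedMap _ horth
  convert this using 2
  rfl

open scoped RealInnerProductSpace in
lemma coneOf_eq_univ [FiniteDimensional ℝ E] (A : Fin m → E)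
    (h1 : ∀ y : E, (∀ i, ⟪A i, y⟫ ≤ 0) → y = 0) :
    coneOf A = Set.univ := by
  classical
  have : CompleteSpace E := FiniteDimensional.complete ℝ E
  -- make it a convex cone
  set K : ConvexCone ℝ E :=
    { carrier := coneOf A
      smul_mem' := by
        rintro c hc x ⟨μ, hμ, rfl⟩
        refine ⟨fun i => c * μ i, fun i => mul_nonneg hc.le (hμ i), ?_⟩
        rw [Finset.smul_sum]
        exact Finset.sum_congr rfl fun i _ => smul_smul c (μ i) (A i)
      add_mem' := by
        rintro x ⟨μ, hμ, rfl⟩ y ⟨ν, hν, rfl⟩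
        refine ⟨fun i => μ i + ν i, fun i => add_nonneg (hμ i) (hν i), ?_⟩
        rw [← Finset.sum_add_distrib]
        exact Finset.sum_congr rfl fun i _ => (add_smul (μ i) (ν i) (A i)).symm } with hK
  have hAK : ∀ i, A i ∈ K := by
    intro i
    refine ⟨fun j => if j = i then 1 else 0, fun j => by dsimp only; split_ifs <;> norm_num, ?_⟩
    simp [ite_smul]
  ext v
  simp only [Set.mem_univ, iff_true]
  by_contra hv
  obtain ⟨y, hy, hyv⟩ :=
    ProperCone.hyperplane_separation' (⟨K.toPointedCone (ConvexCone.Pointed.of_nonempty_of_isClosed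
      ⟨0, fun i => (0:ℝ), fun i => le_refl 0, by simp⟩ (isClosed_coneOf A)), isClosed_coneOf A⟩ : ProperCone ℝ E) hv
  have hy0 : -y = 0 := by
    refine h1 (-y) fun i => ?_
    have := hy (A i) (hAK i)
    rw [inner_neg_right]
    linarith
  rw [neg_eq_zero] at hy0
  rw [hy0] at hyv
  simp at hyv

end Helpers

/-- If the polyhedron `P = {x ∈ ℝ^d : Ax ≤ b}` is nonempty and bounded, then there is a
subset `S` of at most `2d` of the `m` inequalities whose intersection is already bounded. -/
theorem exists_bounded_subsystem {d m : ℕ}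
    (A : Fin m → EuclideanSpace ℝ (Fin d)) (b : Fin m → ℝ)
    (hne : {x : EuclideanSpace ℝ (Fin d) | ∀ i, ⟪A i, x⟫ ≤ b i}.Nonempty)
    (hbdd : Bornology.IsBounded {x : EuclideanSpace ℝ (Fin d) | ∀ i, ⟪A i, x⟫ ≤ b i}) :
    ∃ S : Finset (Fin m), S.card ≤ 2 * d ∧
      Bornology.IsBounded {x : EuclideanSpace ℝ (Fin d) | ∀ i ∈ S, ⟪A i, x⟫ ≤ b i} := by
  classical
  obtain ⟨x0, hx0⟩ := hne
  obtain ⟨R, hR⟩ := isBounded_iff_forall_norm_le.mp hbdd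
  -- Step 1: the dual cone is trivial
  have h1 : ∀ y : EuclideanSpace ℝ (Fin d), (∀ i, ⟪A i, y⟫ ≤ 0) → y = 0 := by
    intro y hy
    by_contra hy0
    have hynorm : 0 < ‖y‖ := norm_pos_iff.mpr hy0
    set t : ℝ := (R + ‖x0‖ + 1) / ‖y‖ with ht
    have hR0 : ‖x0‖ ≤ R := hR x0 hx0
    have htnn : 0 ≤ t := by
      apply div_nonneg _ hynorm.le
      have : (0:ℝ) ≤ ‖x0‖ := norm_nonneg _
      linarith
    have hmem : x0 + t • y ∈ {x : EuclideanSpace ℝ (Fin d) | ∀ i, ⟪A i, x⟫ ≤ b i} := by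
      intro i
      have := hx0 i
      have h2 : ⟪A i, x0 + t • y⟫ = ⟪A i, x0⟫ + t * ⟪A i, y⟫ := by
        rw [inner_add_right, real_inner_smul_right]
      rw [h2]
      nlinarith [hy i, htnn]
    have hn := hR _ hmem
    have h3 : ‖t • y‖ ≤ ‖x0 + t • y‖ + ‖x0‖ := by
      have := norm_add_le (x0 + t • y) (-x0)
      simpa using this
    rw [norm_smul, Real.norm_eq_abs, abs_of_nonneg htnn, ht,
      div_mul_cancel₀ _ hynorm.ne'] at h3
    linarith
  -- Step 2: rows span everything
  have hspan : Submodule.span ℝ (A '' ↑(Finset.univ : Finset (Fin m))) = ⊤ := by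
    have himg : A '' ↑(Finset.univ : Finset (Fin m)) = Set.range A := by
      simp
    rw [himg]
    rw [← Submodule.orthogonal_eq_bot_iff]
    rw [eq_bot_iff]
    intro y hy
    simp only [Submodule.mem_bot]
    refine h1 y fun i => ?_
    have := (Submodule.mem_orthogonal _ y).mp hy (A i)
      (Submodule.subset_span ⟨i, rfl⟩)
    rw [this]
  -- Step 3: a linearly independent spanning subfamily
  obtain ⟨T1, _, hT1LI, hT1span⟩ := extract_basis A (Finset.univ : Finset (Fin m))
  have hT1card : T1.card ≤ d := by
    have := hT1LI.fintype_card_le_finrank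
    rwa [Fintype.card_coe, finrank_euclideanSpace_fin] at this
  -- Step 4: a small subfamily positively generating `-(∑ i ∈ T1, A i)`
  set u : EuclideanSpace ℝ (Fin d) := -(∑ i ∈ T1, A i) with hu
  have hucone : u ∈ coneOf A := by rw [coneOf_eq_univ A h1]; trivial
  obtain ⟨μ, hμ, husum⟩ := hucone
  obtain ⟨T2, _, hT2LI, μ', hμ', hμ'sum⟩ :=
    carath_cone A Finset.univ μ (fun i _ => hμ i)
  have hT2card : T2.card ≤ d := by
    have := hT2LI.fintype_card_le_finrank
    rwa [Fintype.card_coe, finrank_euclideanSpace_fin] at this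
  have hT2u : ∑ i ∈ T2, μ' i • A i = u := by rw [hμ'sum, ← husum]
  set S : Finset (Fin m) := T1 ∪ T2 with hS
  have hScard : S.card ≤ 2 * d := by
    calc S.card ≤ T1.card + T2.card := Finset.card_union_le _ _
      _ ≤ d + d := add_le_add hT1card hT2card
      _ = 2 * d := (two_mul d).symm
  -- Step 5: every vector is a nonneg combination of rows indexed by S
  have key : ∀ v : EuclideanSpace ℝ (Fin d), ∃ ν : Fin m → ℝ, (∀ i, 0 ≤ ν i) ∧ v = ∑ i ∈ S, ν i • A i := by
    intro v
    have hInj : ∀ x ∈ T1, ∀ y ∈ T1, A x = A y → x = y := by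
      intro x hx y hy hxy
      have := hT1LI.injective (a₁ := ⟨x, hx⟩) (a₂ := ⟨y, hy⟩) hxy
      exact Subtype.ext_iff.mp this
    have hvmem : v ∈ Submodule.span ℝ (↑(T1.image A) : Set (EuclideanSpace ℝ (Fin d))) := by
      rw [Finset.coe_image, hT1span, hspan]; trivial
    obtain ⟨c, -, hc⟩ := Submodule.mem_span_finset.mp hvmem
    rw [Finset.sum_image hInj] at hc
    set t : ℝ := ∑ i ∈ T1, |c (A i)| with htdef
    have htnn : 0 ≤ t := Finset.sum_nonneg fun i _ => abs_nonneg _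
    have hct : ∀ i ∈ T1, 0 ≤ c (A i) + t := by
      intro i hi
      have h4 : |c (A i)| ≤ t :=
        Finset.single_le_sum (fun j _ => abs_nonneg (c (A j))) hi
      have := neg_abs_le (c (A i))
      linarith
    refine ⟨fun i => (if i ∈ T1 then c (A i) + t else 0) +
      (if i ∈ T2 then t * μ' i else 0), fun i => ?_, ?_⟩
    · dsimp only
      have e1 : (0:ℝ) ≤ if i ∈ T1 then c (A i) + t else 0 := by
        split_ifs with h
        · exact hct i h
        · exact le_refl 0
      have e2 : (0:ℝ) ≤ if i ∈ T2 then t * μ' i else 0 := by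
        split_ifs with h
        · exact mul_nonneg htnn (hμ' i)
        · exact le_refl 0
      linarith
    · have hsplit : ∑ i ∈ S, ((if i ∈ T1 then c (A i) + t else 0) +
          (if i ∈ T2 then t * μ' i else 0)) • A i
          = (∑ i ∈ S, (if i ∈ T1 then (c (A i) + t) • A i else 0)) +
            ∑ i ∈ S, (if i ∈ T2 then (t * μ' i) • A i else 0) := by
        rw [← Finset.sum_add_distrib]
        refine Finset.sum_congr rfl fun i _ => by split_ifs <;> simp [add_smul]
      rw [hsplit, Finset.sum_ite_mem, Finset.sum_ite_mem,
        Finset.inter_eq_right.mpr (Finset.subset_union_left),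
        Finset.inter_eq_right.mpr (Finset.subset_union_right)]
      have h5 : ∑ i ∈ T2, (t * μ' i) • A i = t • u := by
        rw [← hT2u, Finset.smul_sum]
        exact Finset.sum_congr rfl fun i _ => (smul_smul t (μ' i) (A i)).symm
      have h6 : ∑ i ∈ T1, (c (A i) + t) • A i
          = (∑ i ∈ T1, c (A i) • A i) + t • ∑ i ∈ T1, A i := by
        rw [Finset.smul_sum, ← Finset.sum_add_distrib]
        exact Finset.sum_congr rfl fun i _ => add_smul _ _ _
      rw [h5, h6, hc, hu]
      simp
  -- Step 6: boundedness
  refine ⟨S, hScard, ?_⟩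
  choose νp hνp hνpsum using fun j : Fin d => key (EuclideanSpace.single j 1)
  choose νn hνn hνnsum using fun j : Fin d => key (-EuclideanSpace.single j 1)
  set C : Fin d → ℝ := fun j => max (∑ i ∈ S, νp j i * b i) (∑ i ∈ S, νn j i * b i)
    with hC
  rw [isBounded_iff_forall_norm_le]
  refine ⟨Real.sqrt (∑ j, C j ^ 2), fun x hx => ?_⟩
  have hxj : ∀ j : Fin d, |x j| ≤ C j := by
    intro j
    have hub : ∀ (ν : Fin m → ℝ) (v : EuclideanSpace ℝ (Fin d)), (∀ i, 0 ≤ ν i) →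
        v = ∑ i ∈ S, ν i • A i → ⟪v, x⟫ ≤ ∑ i ∈ S, ν i * b i := by
      intro ν v hν hvsum
      rw [hvsum, sum_inner]
      refine Finset.sum_le_sum fun i hi => ?_
      rw [real_inner_smul_left]
      exact mul_le_mul_of_nonneg_left (hx i hi) (hν i)
    have hp := hub (νp j) _ (hνp j) (hνpsum j)
    have hn := hub (νn j) _ (hνn j) (hνnsum j)
    rw [EuclideanSpace.inner_single_left] at hp
    rw [inner_neg_left, EuclideanSpace.inner_single_left] at hn
    simp only [map_one, one_mul] at hp hn
    rw [abs_le]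
    constructor
    · have : -(∑ i ∈ S, νn j i * b i) ≤ x j := by linarith
      exact le_trans (neg_le_neg (le_max_right _ _)) this
    · exact le_trans hp (le_max_left _ _)
  have hnorm : ‖x‖ = Real.sqrt (∑ j, ‖x j‖ ^ 2) := EuclideanSpace.norm_eq x
  rw [hnorm]
  apply Real.sqrt_le_sqrt
  refine Finset.sum_le_sum fun j _ => ?_
  rw [Real.norm_eq_abs]
  calc |x j| ^ 2 ≤ C j ^ 2 := by
        have h0 : (0:ℝ) ≤ |x j| := abs_nonneg _
        have := hxj j
        nlinarith
    _ = C j ^ 2 := rfl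
end
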